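/- arXiv:math/0501398 — 3 statements merged into one kernel-verified Lean document; each statement's English description precedes it below -/
import Mathlib

section
/- Let V be a finite-dimensional representation of sl(2,ℂ) with standard basis (H,E,F). Then V decomposes as a direct sum of subspaces V = (range of the action of F) ⊕ (kernel of the action of E). -/
set_option linter.unusedSectionVars false

section Sl2Aux

attribute [local instance] LieRing.ofAssociativeRing

variable {V : Type*} [AddCommGroup V] [Module ℂ V] [FiniteDimensional ℂ V]

lemma sl2aux_mapsTo {A B : Module.End ℂ V} {c : ℂ}
    (h : A * B = B * A + c • B) (μ : ℂ) {x : V} (hx : x ∈ A.maxGenEigenspace μ) :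
    B x ∈ A.maxGenEigenspace (μ + c) := by
  rw [Module.End.mem_maxGenEigenspace] at hx ⊢
  obtain ⟨k, hk⟩ := hx
  refine ⟨k, ?_⟩
  have key : (A - (μ + c) • 1) * B = B * (A - μ • 1) := by
    simp only [sub_mul, mul_sub, add_mul, h, add_smul, smul_mul_assoc, mul_smul_comm,
      one_mul, mul_one]
    abel
  have key2 : ∀ j : ℕ, (A - (μ + c) • 1) ^ j * B = B * (A - μ • 1) ^ j := by
    intro j
    induction j with
    | zero => simp
    | succ j ih => rw [pow_succ', pow_succ', mul_assoc, ih, ← mul_assoc, key, mul_assoc]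
  calc ((A - (μ + c) • 1) ^ k) (B x) = ((A - (μ + c) • 1) ^ k * B) x := rfl
    _ = B (((A - μ • 1) ^ k) x) := by rw [key2]; rfl
    _ = 0 := by rw [hk, map_zero]

lemma sl2aux_comm {H E F : Module.End ℂ V}
    (hHE : H * E = E * H + (2 : ℂ) • E) (hEF : E * F - F * E = H) (k : ℕ) :
    E ^ (k + 1) * F - F * E ^ (k + 1) = ((k : ℂ) + 1) • ((H - (k : ℂ) • 1) * E ^ k) := by
  have hEH : ∀ a : ℂ, E * (H - a • 1) = (H - (a + 2) • 1) * E := by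
    intro a
    have hEH' : E * H = H * E - (2 : ℂ) • E := by rw [hHE]; abel
    simp only [mul_sub, sub_mul, add_mul, hEH', mul_smul_comm, smul_mul_assoc,
      mul_one, one_mul, add_smul]
    abel
  induction k with
  | zero => simpa using hEF
  | succ k ih =>
    have hpow : E ^ (k + 1 + 1) = E * E ^ (k + 1) := by rw [pow_succ']
    have expand : E ^ (k + 1 + 1) * F - F * E ^ (k + 1 + 1)
        = E * (E ^ (k + 1) * F - F * E ^ (k + 1)) + (E * F - F * E) * E ^ (k + 1) := by
      rw [hpow]; noncomm_ring
    rw [expand, ih, hEF]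
    have h1 : E * (((k : ℂ) + 1) • ((H - (k : ℂ) • 1) * E ^ k))
        = ((k : ℂ) + 1) • ((H - ((k : ℂ) + 2) • 1) * E ^ (k + 1)) := by
      rw [mul_smul_comm, ← mul_assoc, hEH, mul_assoc, ← pow_succ']
    rw [h1]
    have h2 : H * E ^ (k + 1) = (H - ((k : ℂ) + 1) • 1) * E ^ (k + 1)
        + ((k : ℂ) + 1) • E ^ (k + 1) := by
      simp only [sub_mul, add_mul, smul_mul_assoc, one_mul]; abel
    have h3 : ∀ a : ℂ, (H - a • 1) * E ^ (k + 1) = H * E ^ (k + 1) - a • E ^ (k + 1) := by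
      intro a; simp [sub_mul, smul_mul_assoc]
    rw [h2]
    simp only [h3]
    push_cast
    module


lemma sl2aux_disjoint (H E F : Module.End ℂ V)
    (hHE : ⁅H, E⁆ = (2 : ℂ) • E)
    (hHF : ⁅H, F⁆ = (-2 : ℂ) • F)
    (hEF : ⁅E, F⁆ = H) :
    Disjoint (LinearMap.range F) (LinearMap.ker E) := by
  by_cases hH0 : H = 0
  · have hF : F = 0 := by
      have h2 : ((-2 : ℂ)) • F = 0 := by rw [← hHF, hH0, zero_lie]
      rcases smul_eq_zero.mp h2 with h | h
      · norm_num at h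
      · exact h
    simp [hF]
  have hHEmul : H * E = E * H + (2 : ℂ) • E := by
    have : H * E - E * H = (2 : ℂ) • E := by rw [← Ring.lie_def, hHE]
    rw [← this]; abel
  have hHFmul : H * F = F * H + (-2 : ℂ) • F := by
    have h5 : H * F - F * H = (-2 : ℂ) • F := by rw [← Ring.lie_def, hHF]
    rw [← h5]; abel
  have hEFmul : E * F - F * E = H := by rw [← Ring.lie_def, hEF]
  classical
  rw [Submodule.disjoint_def]
  by_contra hcon
  push_neg at hcon
  obtain ⟨x₀, hx₀F, hx₀E, hx₀⟩ := hcon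
  set W : Submodule ℂ V := LinearMap.range F ⊓ LinearMap.ker E with hW
  have hWne : W ≠ ⊥ := by
    intro h
    have hx : x₀ ∈ W := Submodule.mem_inf.mpr ⟨hx₀F, hx₀E⟩
    rw [h, Submodule.mem_bot] at hx
    exact hx₀ hx
  have hWinv : ∀ x ∈ W, H x ∈ W := by
    rintro x hx
    obtain ⟨hxF, hxE⟩ := Submodule.mem_inf.mp hx
    obtain ⟨y, hy⟩ := hxF
    refine Submodule.mem_inf.mpr ⟨⟨H y + (-2 : ℂ) • y, ?_⟩, ?_⟩
    · have h5 := LinearMap.congr_fun hHFmul y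
      simp only [Module.End.mul_apply, LinearMap.add_apply, LinearMap.smul_apply] at h5
      rw [map_add, map_smul, hy]
      rw [hy] at h5
      exact h5.symm
    · have := LinearMap.congr_fun hHEmul x
      simp only [LinearMap.mem_ker] at hxE
      simp only [Module.End.mul_apply, LinearMap.add_apply, LinearMap.smul_apply] at this
      have hEH : E (H x) = H (E x) - (2 : ℂ) • E x := by
        rw [eq_sub_iff_add_eq, ← this]
      simp [LinearMap.mem_ker, hEH, hxE]
  haveI : Nontrivial W := Submodule.nontrivial_iff_ne_bot.mpr hWne
  have hWinv' : Set.MapsTo H W W := fun x hx => hWinv x hx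
  obtain ⟨μ, hμ⟩ := Module.End.exists_eigenvalue (LinearMap.restrict H hWinv')
  obtain ⟨v₀, hv₀⟩ := hμ.exists_hasEigenvector
  set v : V := (v₀ : V) with hvdef
  have hv_ne : v ≠ 0 := fun h => hv₀.right (Subtype.ext h)
  have hvW : v ∈ W := v₀.2
  have hvF : v ∈ LinearMap.range F := (Submodule.mem_inf.mp hvW).1
  have hvE : E v = 0 := (Submodule.mem_inf.mp hvW).2
  have hHv : H v = μ • v := by
    have h1 := hv₀.apply_eq_smul
    have h2 := congr_arg (Subtype.val) h1
    exact h2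
  have t : IsSl2Triple H E F :=
    { h_ne_zero := hH0
      lie_e_f := hEF
      lie_h_e_nsmul := by
        rw [hHE, ← Nat.cast_smul_eq_nsmul (R := ℂ)]; norm_num
      lie_h_f_nsmul := by
        rw [hHF, ← Nat.cast_smul_eq_nsmul (R := ℂ)]
        norm_num [neg_smul] }
  have P : t.HasPrimitiveVectorWith v μ :=
    { ne_zero := hv_ne
      lie_h := by simpa [Module.End.lie_apply] using hHv
      lie_e := by simpa [Module.End.lie_apply] using hvE }
  obtain ⟨n, hn⟩ := P.exists_nat
  have hv_gen : v ∈ H.maxGenEigenspace (n : ℂ) := by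
    rw [Module.End.mem_maxGenEigenspace]
    refine ⟨1, ?_⟩
    simp [hHv, hn]
  have hwex : ∃ w ∈ H.maxGenEigenspace ((n : ℂ) + 2), ∃ w₂ ∈
      (⨆ (ν : ℂ) (_ : ν ≠ (n : ℂ) + 2), H.maxGenEigenspace ν), F w + F w₂ = v := by
    obtain ⟨w', hw'⟩ := hvF
    have hsplit : (⊤ : Submodule ℂ V) = H.maxGenEigenspace ((n : ℂ) + 2)
        ⊔ ⨆ (ν : ℂ) (_ : ν ≠ (n : ℂ) + 2), H.maxGenEigenspace ν := by
      rw [← Module.End.iSup_maxGenEigenspace_eq_top H]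
      exact iSup_split_single _ _
    have hmem : w' ∈ H.maxGenEigenspace ((n : ℂ) + 2)
        ⊔ ⨆ (ν : ℂ) (_ : ν ≠ (n : ℂ) + 2), H.maxGenEigenspace ν := by
      rw [← hsplit]; trivial
    obtain ⟨w, hw, w₂, hw₂, hsum⟩ := Submodule.mem_sup.mp hmem
    exact ⟨w, hw, w₂, hw₂, by rw [← map_add, hsum, hw']⟩
  obtain ⟨w, hw_mem, w₂, hw₂_mem, hw_sum⟩ := hwex
  have hFmaps : ∀ (ν : ℂ) (x : V), x ∈ H.maxGenEigenspace ν →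
      F x ∈ H.maxGenEigenspace (ν - 2) := by
    intro ν x hx
    have := sl2aux_mapsTo (A := H) (B := F) (c := (-2 : ℂ)) hHFmul ν hx
    simpa [sub_eq_add_neg] using this
  have hEmaps : ∀ (ν : ℂ) (x : V), x ∈ H.maxGenEigenspace ν →
      E x ∈ H.maxGenEigenspace (ν + 2) := fun ν x hx =>
    sl2aux_mapsTo (A := H) (B := E) (c := (2 : ℂ)) hHEmul ν hx
  have hFw₂ : F w₂ ∈ ⨆ (ν : ℂ) (_ : ν ≠ (n : ℂ)), H.maxGenEigenspace ν := by
    have h1 : F w₂ ∈ Submodule.map F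
        (⨆ (ν : ℂ) (_ : ν ≠ (n : ℂ) + 2), H.maxGenEigenspace ν) :=
      Submodule.mem_map_of_mem hw₂_mem
    have h2 : Submodule.map F (⨆ (ν : ℂ) (_ : ν ≠ (n : ℂ) + 2), H.maxGenEigenspace ν)
        ≤ ⨆ (ν : ℂ) (_ : ν ≠ (n : ℂ)), H.maxGenEigenspace ν := by
      rw [Submodule.map_iSup]
      refine iSup_le fun ν => ?_
      rw [Submodule.map_iSup]
      refine iSup_le fun hν => ?_
      have hsub : Submodule.map F (H.maxGenEigenspace ν) ≤ H.maxGenEigenspace (ν - 2) := by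
        rintro _ ⟨x, hx, rfl⟩
        exact hFmaps ν x hx
      refine hsub.trans ?_
      have hν2 : ν - 2 ≠ (n : ℂ) := fun h => hν (by rw [← h]; ring)
      exact le_iSup₂ (f := fun (ν : ℂ) (_ : ν ≠ (n : ℂ)) => H.maxGenEigenspace ν) (ν - 2) hν2
    exact h2 h1
  have hFw_gen : F w ∈ H.maxGenEigenspace (n : ℂ) := by
    have := hFmaps ((n : ℂ) + 2) w hw_mem
    simpa using this
  have hvFw : v = F w := by
    have hdiff : v - F w ∈ H.maxGenEigenspace (n : ℂ) := Submodule.sub_mem _ hv_gen hFw_gen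
    have hdiff' : v - F w ∈ ⨆ (ν : ℂ) (_ : ν ≠ (n : ℂ)), H.maxGenEigenspace ν := by
      have hsw : v - F w = F w₂ := by rw [← hw_sum]; abel
      rw [hsw]; exact hFw₂
    have hind := Module.End.independent_maxGenEigenspace H (i := (n : ℂ))
    have hbot : v - F w ∈ (⊥ : Submodule ℂ V) :=
      hind.le_bot (Submodule.mem_inf.mpr ⟨hdiff, hdiff'⟩)
    rw [Submodule.mem_bot] at hbot
    exact (sub_eq_zero.mp hbot)
  have hw_ne : w ≠ 0 := by rintro rfl; exact hv_ne (by simp [hvFw])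
  have hEpow : ∀ k : ℕ, (E ^ k) w ∈ H.maxGenEigenspace ((n : ℂ) + 2 + 2 * k) := by
    intro k
    induction k with
    | zero => simpa using hw_mem
    | succ k ih =>
      have h1 := hEmaps _ _ ih
      have hEq : (n : ℂ) + 2 + 2 * k + 2 = (n : ℂ) + 2 + 2 * (k + 1 : ℕ) := by push_cast; ring
      rw [hEq] at h1
      simpa [pow_succ'] using h1
  have hkill : ∃ k : ℕ, (E ^ k) w = 0 := by
    by_contra hc
    push_neg at hc
    set d := Module.finrank ℂ V with hd
    have hinj : Function.Injective (fun k : Fin (d + 1) => (n : ℂ) + 2 + 2 * ((k : ℕ) : ℂ)) := by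
      intro a b hab
      simp only [add_right_inj] at hab
      have hab2 : ((a : ℕ) : ℂ) = ((b : ℕ) : ℂ) := by
        have := mul_left_cancel₀ (two_ne_zero (α := ℂ)) hab
        exact this
      exact Fin.ext (Nat.cast_injective hab2)
    have hindep : iSupIndep (fun k : Fin (d + 1) =>
        H.maxGenEigenspace ((n : ℂ) + 2 + 2 * ((k : ℕ) : ℂ))) :=
      (Module.End.independent_maxGenEigenspace H).comp hinj
    have hli : LinearIndependent ℂ (fun k : Fin (d + 1) => (E ^ (k : ℕ)) w) :=
      hindep.linearIndependent _ (fun k => hEpow (k : ℕ)) (fun k => hc (k : ℕ))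
    have hcard := hli.fintype_card_le_finrank
    simp only [Fintype.card_fin, ← hd] at hcard
    omega
  have hex : ∃ k : ℕ, (E ^ k) w = 0 := hkill
  set m : ℕ := Nat.find hex - 1 with hm
  have hfind_pos : Nat.find hex ≠ 0 := by
    intro h
    have hws := Nat.find_spec hex
    rw [h] at hws
    simpa using hw_ne hws
  have hmsucc : m + 1 = Nat.find hex := by omega
  have hEm_ne : (E ^ m) w ≠ 0 := Nat.find_min hex (by omega)
  have hEm1 : (E ^ (m + 1)) w = 0 := by rw [hmsucc]; exact Nat.find_spec hex
  have hcomm := sl2aux_comm hHEmul hEFmul m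
  have hcomm' := LinearMap.congr_fun hcomm w
  have hLHS : (E ^ (m + 1) * F - F * E ^ (m + 1)) w = 0 := by
    have h3 : (E ^ (m + 1)) (F w) = 0 := by
      rw [← hvFw, pow_succ, Module.End.mul_apply, hvE, map_zero]
    simp [LinearMap.sub_apply, Module.End.mul_apply, h3, hEm1]
  have hHEm : H ((E ^ m) w) = (m : ℂ) • (E ^ m) w := by
    rw [hLHS] at hcomm'
    have hz : ((m : ℂ) + 1) • ((H - (m : ℂ) • 1) ((E ^ m) w)) = 0 := by
      simpa [Module.End.mul_apply] using hcomm'.symm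
    have hm1 : ((m : ℂ) + 1) ≠ 0 := Nat.cast_add_one_ne_zero m
    have h0 : (H - (m : ℂ) • 1) ((E ^ m) w) = 0 := by
      rcases smul_eq_zero.mp hz with h | h
      · exact absurd h hm1
      · exact h
    have h4 : H ((E ^ m) w) - (m : ℂ) • (E ^ m) w = 0 := by
      simpa [LinearMap.sub_apply, LinearMap.smul_apply] using h0
    exact sub_eq_zero.mp h4
  have hgen1 : (E ^ m) w ∈ H.maxGenEigenspace ((m : ℕ) : ℂ) := by
    rw [Module.End.mem_maxGenEigenspace]
    refine ⟨1, ?_⟩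
    simp [hHEm]
  have hgen2 : (E ^ m) w ∈ H.maxGenEigenspace ((n : ℂ) + 2 + 2 * m) := hEpow m
  have hne : ((m : ℕ) : ℂ) ≠ (n : ℂ) + 2 + 2 * m := by
    intro h
    have h5 : ((n + m + 2 : ℕ) : ℂ) = 0 := by push_cast; linear_combination -h
    have h6 := Nat.cast_eq_zero.mp h5
    omega
  have hdisj := Module.End.disjoint_genEigenspace H hne ⊤ ⊤
  have hbot : (E ^ m) w ∈ (⊥ : Submodule ℂ V) :=
    hdisj.le_bot (Submodule.mem_inf.mpr ⟨hgen1, hgen2⟩)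
  rw [Submodule.mem_bot] at hbot
  exact hEm_ne hbot

end Sl2Aux

/-- A finite-dimensional representation of `sl(2,ℂ)` decomposes as the internal
direct sum of the range of `F` and the kernel of `E`. -/
theorem sl2_isCompl_range_F_ker_E
    (V : Type*) [AddCommGroup V] [Module ℂ V] [FiniteDimensional ℂ V]
    (H E F : Module.End ℂ V)
    (hHE : ⁅H, E⁆ = (2 : ℂ) • E)
    (hHF : ⁅H, F⁆ = (-2 : ℂ) • F)
    (hEF : ⁅E, F⁆ = H) :
    IsCompl (LinearMap.range F) (LinearMap.ker E) := by
  have d1 : Disjoint (LinearMap.range F) (LinearMap.ker E) :=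
    sl2aux_disjoint H E F hHE hHF hEF
  have d2 : Disjoint (LinearMap.range E) (LinearMap.ker F) := by
    letI := LieRing.ofAssociativeRing (A := Module.End ℂ V)
    refine sl2aux_disjoint (-H) F E ?_ ?_ ?_
    · rw [neg_lie, hHF]; simp
    · rw [neg_lie, hHE]; simp
    · rw [← lie_skew, hEF]
  have key : ∀ (E' F' : Module.End ℂ V), Disjoint (LinearMap.range F') (LinearMap.ker E') →
      Module.finrank ℂ (LinearMap.range F') ≤ Module.finrank ℂ (LinearMap.range E') := by
    intro E' F' hd
    have h1 := Submodule.finrank_sup_add_finrank_inf_eq (LinearMap.range F') (LinearMap.ker E')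
    rw [hd.eq_bot] at h1
    simp only [finrank_bot, add_zero] at h1
    have h2 : Module.finrank ℂ ↥(LinearMap.range F' ⊔ LinearMap.ker E')
        ≤ Module.finrank ℂ V := Submodule.finrank_le _
    have h3 := LinearMap.finrank_range_add_finrank_ker E'
    omega
  have heq : Module.finrank ℂ (LinearMap.range F) = Module.finrank ℂ (LinearMap.range E) :=
    le_antisymm (key E F d1) (key F E d2)
  refine ⟨d1, ?_⟩
  rw [codisjoint_iff]
  apply Submodule.eq_top_of_finrank_eq
  have h1 := Submodule.finrank_sup_add_finrank_inf_eq (LinearMap.range F) (LinearMap.ker E)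
  rw [d1.eq_bot] at h1
  simp only [finrank_bot, add_zero] at h1
  have h3 := LinearMap.finrank_range_add_finrank_ker E
  omega
end

section
/- Let V be a finite-dimensional representation of sl(2,ℂ) with standard basis (H,E,F). Then the kernel of the action of E and the kernel of the action of F have the same dimension. -/
open Finset LinearMap

section Texp

variable {A : Type*} [Ring A] [Algebra ℂ A]

/-- Truncated exponential. -/
noncomputable def texp (n : ℕ) (a : A) : A :=
  ∑ k ∈ Finset.range n, (k.factorial : ℂ)⁻¹ • a ^ k

lemma texp_add_of_commute {a b : A} (h : Commute a b) {p q : ℕ}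
    (ha : a ^ p = 0) (hb : b ^ q = 0) :
    texp (p + q) (a + b) = texp p a * texp q b := by
  classical
  set N := p + q with hN
  set f : ℕ → ℕ → A := fun i j => ((i.factorial : ℂ)⁻¹ * (j.factorial : ℂ)⁻¹) • (a ^ i * b ^ j)
    with hfdef
  have hf0 : ∀ i j, p ≤ i ∨ q ≤ j → f i j = 0 := by
    intro i j hij
    rcases hij with hi | hj
    · simp [hfdef, pow_eq_zero_of_le hi ha]
    · simp [hfdef, pow_eq_zero_of_le hj hb]
  have hRHS : texp p a * texp q b = ∑ i ∈ Finset.range p, ∑ j ∈ Finset.range q, f i j := by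
    rw [texp, texp, Finset.sum_mul_sum]
    refine Finset.sum_congr rfl fun i _ => Finset.sum_congr rfl fun j _ => ?_
    rw [smul_mul_smul_comm]
  have hLHS : texp N (a + b) = ∑ k ∈ Finset.range N, ∑ i ∈ Finset.range (k + 1), f i (k - i) := by
    rw [texp]
    refine Finset.sum_congr rfl fun k _ => ?_
    rw [h.add_pow, Finset.smul_sum]
    refine Finset.sum_congr rfl fun i hi => ?_
    rw [Finset.mem_range, Nat.lt_succ_iff] at hi
    have hterm : a ^ i * b ^ (k - i) * (k.choose i : A)
        = ((k.choose i : ℂ)) • (a ^ i * b ^ (k - i)) := by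
      rw [Nat.cast_smul_eq_nsmul, nsmul_eq_mul, (Nat.cast_commute (k.choose i) _).eq]
    rw [hterm, smul_smul]
    have hfact : (k.factorial : ℂ)⁻¹ * (k.choose i : ℂ)
        = (i.factorial : ℂ)⁻¹ * ((k - i).factorial : ℂ)⁻¹ := by
      rw [Nat.cast_choose ℂ hi]
      have h1 : (k.factorial : ℂ) ≠ 0 := Nat.cast_ne_zero.mpr k.factorial_ne_zero
      have h2 : (i.factorial : ℂ) ≠ 0 := Nat.cast_ne_zero.mpr i.factorial_ne_zero
      have h3 : ((k - i).factorial : ℂ) ≠ 0 := Nat.cast_ne_zero.mpr (k - i).factorial_ne_zero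
      field_simp
    rw [hfact]
  rw [hLHS, hRHS]
  have step1 : ∑ k ∈ Finset.range N, ∑ i ∈ Finset.range (k + 1), f i (k - i)
      = ∑ z ∈ (range N ×ˢ range N).filter (fun z => z.1 + z.2 < N), f z.1 z.2 := by
    rw [Finset.sum_sigma']
    refine Finset.sum_nbij' (fun z => (z.2, z.1 - z.2)) (fun z => ⟨z.1 + z.2, z.1⟩)
      ?_ ?_ ?_ ?_ ?_
    · rintro ⟨k, i⟩ hz
      simp only [Finset.mem_sigma, Finset.mem_range, Nat.lt_succ_iff] at hz
      simp only [Finset.mem_filter, Finset.mem_product, Finset.mem_range]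
      omega
    · rintro ⟨i, j⟩ hz
      simp only [Finset.mem_filter, Finset.mem_product, Finset.mem_range] at hz
      simp only [Finset.mem_sigma, Finset.mem_range, Nat.lt_succ_iff]
      omega
    · rintro ⟨k, i⟩ hz
      simp only [Finset.mem_sigma, Finset.mem_range, Nat.lt_succ_iff] at hz
      simp only [Sigma.mk.inj_iff]
      constructor
      · omega
      · exact heq_of_eq rfl
    · rintro ⟨i, j⟩ hz
      simp
    · rintro ⟨k, i⟩ _
      rfl
  have step2 : ∑ z ∈ (range N ×ˢ range N).filter (fun z => z.1 + z.2 < N), f z.1 z.2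
      = ∑ z ∈ Finset.range N ×ˢ range N, f z.1 z.2 := by
    refine Finset.sum_subset (Finset.filter_subset _ _) ?_
    rintro ⟨i, j⟩ hz hz'
    simp only [Finset.mem_product, Finset.mem_range] at hz
    simp only [Finset.mem_filter, Finset.mem_product, Finset.mem_range, not_and] at hz'
    refine hf0 i j ?_
    omega
  have step3 : ∑ z ∈ Finset.range N ×ˢ range N, f z.1 z.2
      = ∑ i ∈ Finset.range p, ∑ j ∈ Finset.range q, f i j := by
    rw [Finset.sum_product]
    have inner : ∀ i, ∑ j ∈ Finset.range q, f i j = ∑ j ∈ Finset.range N, f i j := by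
      intro i
      refine Finset.sum_subset (Finset.range_subset_range.mpr (by omega)) ?_
      intro j _ hj
      exact hf0 i j (Or.inr (by simpa [Finset.mem_range, not_lt] using hj))
    have outer : ∑ i ∈ Finset.range p, ∑ j ∈ Finset.range N, f i j = ∑ i ∈ Finset.range N, ∑ j ∈ Finset.range N, f i j := by
      refine Finset.sum_subset (Finset.range_subset_range.mpr (by omega)) ?_
      intro i _ hi
      refine Finset.sum_eq_zero fun j _ => ?_
      exact hf0 i j (Or.inl (by simpa [Finset.mem_range, not_lt] using hi))
    rw [Finset.sum_congr rfl fun i _ => inner i, outer]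
  rw [step1, step2, step3]

lemma texp_zero_of_pos {n : ℕ} (hn : 0 < n) : texp n (0 : A) = 1 := by
  rw [texp]
  rw [Finset.sum_eq_single_of_mem 0 (Finset.mem_range.mpr hn)]
  · simp
  · intro k _ hk
    simp [zero_pow hk]

lemma texp_mul_texp_neg {a : A} {p : ℕ} (hp : 0 < p) (ha : a ^ p = 0) :
    texp p a * texp p (-a) = 1 := by
  have hneg : (-a) ^ p = 0 := by rw [neg_pow, ha, mul_zero]
  have := texp_add_of_commute (Commute.neg_right (Commute.refl a)) ha hneg
  rw [add_neg_cancel, texp_zero_of_pos (by omega)] at this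
  exact this.symm

lemma texp_neg_mul_texp {a : A} {p : ℕ} (hp : 0 < p) (ha : a ^ p = 0) :
    texp p (-a) * texp p a = 1 := by
  have hneg : (-a) ^ p = 0 := by rw [neg_pow, ha, mul_zero]
  have := texp_add_of_commute (Commute.neg_left (Commute.refl a)) hneg ha
  rw [neg_add_cancel, texp_zero_of_pos (by omega)] at this
  exact this.symm

lemma texp_isUnit {a : A} {p : ℕ} (hp : 0 < p) (ha : a ^ p = 0) : IsUnit (texp p a) :=
  ⟨⟨texp p a, texp p (-a), texp_mul_texp_neg hp ha, texp_neg_mul_texp hp ha⟩, rfl⟩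

lemma texp_mulLeft (n : ℕ) (a : A) :
    texp n (LinearMap.mulLeft ℂ a) = LinearMap.mulLeft ℂ (texp n a) := by
  ext x
  simp only [texp, LinearMap.coe_sum, Finset.sum_apply, LinearMap.smul_apply,
    LinearMap.pow_mulLeft, LinearMap.mulLeft_apply, Finset.sum_mul, smul_mul_assoc]

lemma texp_mulRight (n : ℕ) (a : A) :
    texp n (LinearMap.mulRight ℂ a) = LinearMap.mulRight ℂ (texp n a) := by
  ext x
  simp only [texp, LinearMap.coe_sum, Finset.sum_apply, LinearMap.smul_apply,
    LinearMap.pow_mulRight, LinearMap.mulRight_apply, Finset.mul_sum, mul_smul_comm]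

lemma mulRight_neg' (a : A) : LinearMap.mulRight ℂ (-a) = -LinearMap.mulRight ℂ a := by
  ext x; simp

/-- Key conjugation identity: `exp(a) * x = (exp(ad a) x) * exp(a)` for nilpotent `a`. -/
lemma texp_conj (a x : A) {p : ℕ} (hp : 0 < p) (ha : a ^ p = 0) :
    texp p a * x
      = (texp (p + p) (LinearMap.mulLeft ℂ a - LinearMap.mulRight ℂ a)) x * texp p a := by
  have hL : (LinearMap.mulLeft ℂ a) ^ p = 0 := by
    rw [LinearMap.pow_mulLeft, ha, LinearMap.mulLeft_zero_eq_zero]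
  have hR : (-(LinearMap.mulRight ℂ a)) ^ p = 0 := by
    rw [neg_pow (R := Module.End ℂ A), LinearMap.pow_mulRight, ha, LinearMap.mulRight_zero_eq_zero, mul_zero]
  have hcomm : Commute (LinearMap.mulLeft ℂ a) (-(LinearMap.mulRight ℂ a)) :=
    (LinearMap.commute_mulLeft_right (R := ℂ) a a).neg_right
  have key : texp (p + p) (LinearMap.mulLeft ℂ a - LinearMap.mulRight ℂ a)
      = texp p (LinearMap.mulLeft ℂ a) * texp p (-(LinearMap.mulRight ℂ a)) := by
    rw [sub_eq_add_neg]
    exact texp_add_of_commute hcomm hL hR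
  rw [key, Module.End.mul_apply, texp_mulLeft, ← mulRight_neg', texp_mulRight,
    LinearMap.mulLeft_apply, LinearMap.mulRight_apply, mul_assoc, mul_assoc,
    texp_neg_mul_texp hp ha, mul_one]

lemma texp_apply_of_pow3 (δ : Module.End ℂ A) (x : A) {n : ℕ} (hn : 3 ≤ n)
    (h3 : (δ ^ 3) x = 0) :
    (texp n δ) x = x + δ x + (2⁻¹ : ℂ) • (δ ^ 2) x := by
  have hsum : (texp n δ) x = ∑ k ∈ Finset.range n, (k.factorial : ℂ)⁻¹ • (δ ^ k) x := by
    simp [texp, LinearMap.coe_sum, Finset.sum_apply, LinearMap.smul_apply]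
  have hvan : ∀ k ∈ Finset.range n, k ∉ Finset.range 3 → (k.factorial : ℂ)⁻¹ • (δ ^ k) x = 0 := by
    intro k _ hk
    rw [Finset.mem_range, not_lt] at hk
    have : (δ ^ k) x = 0 := by
      rw [← Nat.sub_add_cancel hk, pow_add, Module.End.mul_apply, h3, map_zero]
    rw [this, smul_zero]
  rw [hsum, ← Finset.sum_subset (Finset.range_subset_range.mpr hn) hvan]
  simp [Finset.sum_range_succ, Nat.factorial, pow_succ]

end Texp

section Nilp

variable {V : Type*} [AddCommGroup V] [Module ℂ V] [FiniteDimensional ℂ V]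

lemma nilpotent_of_bracket_smul (H X : Module.End ℂ V) (c : ℂ) (hc : c ≠ 0)
    (hcomm : H * X - X * H = c • X) : IsNilpotent X := by
  have hshift : ∀ (μ : ℂ) x, x ∈ H.maxGenEigenspace μ → X x ∈ H.maxGenEigenspace (μ + c) := by
    intro μ x hx
    rw [Module.End.mem_maxGenEigenspace] at hx ⊢
    obtain ⟨k, hk⟩ := hx
    refine ⟨k, ?_⟩
    have h2 : H * X = X * H + c • X := by rw [← hcomm]; abel
    have h1 : (H - (μ + c) • 1) * X = X * (H - μ • 1) := by
      rw [sub_mul, mul_sub, smul_mul_assoc, one_mul, mul_smul_comm, mul_one, h2, add_smul]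
      abel
    have h3 : ∀ n : ℕ, (H - (μ + c) • 1) ^ n * X = X * (H - μ • 1) ^ n := by
      intro n
      induction n with
      | zero => simp
      | succ n ih =>
        rw [pow_succ, pow_succ, mul_assoc, h1, ← mul_assoc, ih, mul_assoc]
    calc ((H - (μ + c) • 1) ^ k) (X x) = ((H - (μ + c) • 1) ^ k * X) x := rfl
      _ = (X * (H - μ • 1) ^ k) x := by rw [h3]
      _ = X (((H - μ • 1) ^ k) x) := rfl
      _ = 0 := by rw [hk, map_zero]
  have main : ∀ m : V, ∃ n : ℕ, (X ^ n) m = 0 := by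
    intro m
    have hm : m ∈ ⨆ μ : ℂ, H.maxGenEigenspace μ := by
      rw [Module.End.iSup_maxGenEigenspace_eq_top]; trivial
    refine Submodule.iSup_induction (motive := fun y => ∃ n : ℕ, (X ^ n) y = 0) _ hm ?_ ⟨0, by simp⟩ ?_
    · intro μ x hx
      have hiter : ∀ n : ℕ, (X ^ n) x ∈ H.maxGenEigenspace (μ + n * c) := by
        intro n
        induction n with
        | zero => simpa using hx
        | succ n ih =>
          have hmem := hshift (μ + n * c) _ ih
          have heq : μ + ↑n * c + c = μ + (↑(n + 1) : ℂ) * c := by push_cast; ring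
          rw [pow_succ', Module.End.mul_apply]
          exact heq ▸ hmem
      have hfin : {n : ℕ | H.HasEigenvalue (μ + n * c)}.Finite := by
        have hinj : Set.InjOn (fun n : ℕ => μ + n * c) {n : ℕ | H.HasEigenvalue (μ + n * c)} := by
          intro a _ b _ hab
          simp only at hab
          have h1 : (a : ℂ) * c = b * c := by linear_combination hab
          have h2 : (a : ℂ) = b := mul_right_cancel₀ hc h1
          exact_mod_cast h2
        exact Set.Finite.of_finite_image
          (H.finite_hasEigenvalue.subset (by rintro y ⟨n, hn, rfl⟩; exact hn)) hinj
      obtain ⟨n, hn⟩ := hfin.infinite_compl.nonempty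
      refine ⟨n, ?_⟩
      by_contra hne
      have hbot : H.maxGenEigenspace (μ + n * c) ≠ ⊥ := by
        intro hbot
        have hzz := hiter n
        rw [hbot, Submodule.mem_bot] at hzz
        exact hne hzz
      exact hn (Module.End.HasUnifEigenvalue.lt zero_lt_one hbot)
    · rintro x y ⟨n, hn⟩ ⟨k, hk⟩
      refine ⟨n + k, ?_⟩
      rw [map_add]
      have h1 : (X ^ (n + k)) x = 0 := by
        rw [add_comm, pow_add, Module.End.mul_apply, hn, map_zero]
      have h2 : (X ^ (n + k)) y = 0 := by
        rw [pow_add, Module.End.mul_apply, hk, map_zero]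
      rw [h1, h2, add_zero]
  exact ((X.charpoly_nilpotent_tfae).out 0 2).mpr main

end Nilp

/-- In a finite-dimensional representation of `sl(2,ℂ)`, the kernels of `E` and
of `F` have the same dimension. -/
theorem sl2_finrank_ker_E_eq_finrank_ker_F
    (V : Type*) [AddCommGroup V] [Module ℂ V] [FiniteDimensional ℂ V]
    (H E F : Module.End ℂ V)
    (hHE : ⁅H, E⁆ = (2 : ℂ) • E)
    (hHF : ⁅H, F⁆ = (-2 : ℂ) • F)
    (hEF : ⁅E, F⁆ = H) :
    Module.finrank ℂ (LinearMap.ker E) = Module.finrank ℂ (LinearMap.ker F) := by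
  rw [Ring.lie_def] at hHE hHF hEF
  -- E and F are nilpotent
  obtain ⟨p₀, hp₀⟩ := nilpotent_of_bracket_smul H E 2 two_ne_zero hHE
  obtain ⟨q₀, hq₀⟩ := nilpotent_of_bracket_smul H F (-2) (by norm_num) hHF
  set P : ℕ := p₀ + 2 with hPdef
  set Q : ℕ := q₀ + 2 with hQdef
  have hP : E ^ P = 0 := pow_eq_zero_of_le (by omega) hp₀
  have hQ : F ^ Q = 0 := pow_eq_zero_of_le (by omega) hq₀
  have hPpos : 0 < P := by omega
  have hQpos : 0 < Q := by omega
  have hnF : (-F) ^ Q = 0 := by rw [neg_pow, hQ, mul_zero]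
  set u : Module.End ℂ V := texp P E with hu
  set v : Module.End ℂ V := texp Q (-F) with hv
  set δE : Module.End ℂ (Module.End ℂ V) :=
    LinearMap.mulLeft ℂ E - LinearMap.mulRight ℂ E with hδE
  set δG : Module.End ℂ (Module.End ℂ V) :=
    LinearMap.mulLeft ℂ (-F) - LinearMap.mulRight ℂ (-F) with hδG
  have δE_apply : ∀ x : Module.End ℂ V, δE x = E * x - x * E := by intro x; simp [hδE]
  have δG_apply : ∀ x : Module.End ℂ V, δG x = (-F) * x - x * (-F) := by intro x; simp [hδG]
  -- basic bracket computations
  have dE_E : δE E = 0 := by rw [δE_apply, sub_self]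
  have dE_F : δE F = H := by rw [δE_apply, hEF]
  have dE_H : δE H = (-2 : ℂ) • E := by
    rw [δE_apply]
    have : E * H - H * E = -(H * E - E * H) := by abel
    rw [this, hHE, neg_smul]
  have dG_E : δG E = H := by
    rw [δG_apply, neg_mul, mul_neg, ← hEF]
    abel
  have dG_H : δG H = (-2 : ℂ) • F := by
    rw [δG_apply, neg_mul, mul_neg, ← hHF]
    abel
  have dG_F : δG F = 0 := by
    rw [δG_apply, neg_mul, mul_neg, sub_neg_eq_add, neg_add_cancel]
  -- conjugation identities
  have e1 : u * E = E * u := by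
    rw [hu, texp_conj E E hPpos hP, ← hδE,
      texp_apply_of_pow3 δE E (by omega) (by simp [pow_succ, dE_E]),
      pow_two, Module.End.mul_apply, dE_E, map_zero, smul_zero, add_zero, add_zero]
  have e2 : u * H = (H + (-2 : ℂ) • E) * u := by
    rw [hu, texp_conj E H hPpos hP, ← hδE,
      texp_apply_of_pow3 δE H (by omega) ?h3]
    · rw [pow_two, Module.End.mul_apply, dE_H, map_smul, dE_E, smul_zero, smul_zero, add_zero]
    case h3 =>
      rw [pow_succ, pow_two, Module.End.mul_apply, Module.End.mul_apply, dE_H, map_smul, dE_E,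
        smul_zero, map_zero]
  have e3 : u * F = (F + H + (-1 : ℂ) • E) * u := by
    rw [hu, texp_conj E F hPpos hP, ← hδE,
      texp_apply_of_pow3 δE F (by omega) ?h3]
    · rw [pow_two, Module.End.mul_apply, dE_F, dE_H, smul_smul]
      norm_num
    case h3 =>
      rw [pow_succ, pow_two, Module.End.mul_apply, Module.End.mul_apply, dE_F, dE_H, map_smul,
        dE_E, smul_zero]
  have e4 : v * E = (E + H + (-1 : ℂ) • F) * v := by
    rw [hv, texp_conj (-F) E hQpos hnF, ← hδG,
      texp_apply_of_pow3 δG E (by omega) ?h3]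
    · rw [pow_two, Module.End.mul_apply, dG_E, dG_H, smul_smul]
      norm_num
    case h3 =>
      rw [pow_succ, pow_two, Module.End.mul_apply, Module.End.mul_apply, dG_E, dG_H, map_smul,
        dG_F, smul_zero]
  -- the Weyl element
  have hsm2 : (-2 : ℂ) • E = -(E + E) := by rw [neg_smul, two_smul]
  have hsm1 : (-1 : ℂ) • E = -E := by rw [neg_smul, one_smul]
  have hsm1F : (-1 : ℂ) • F = -F := by rw [neg_smul, one_smul]
  have e2' : u * H = (H - (E + E)) * u := by rw [e2, hsm2]; noncomm_ring
  have e3' : u * F = (F + H - E) * u := by rw [e3, hsm1]; noncomm_ring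
  have e4' : v * E = (E + H - F) * v := by rw [e4, hsm1F]; noncomm_ring
  set w : Module.End ℂ V := u * v * u with hw
  have hFw : F * w = -(w * E) := by
    have hwE : w * E = (-F) * w := by
      have h5 : w * E = u * v * (u * E) := by rw [hw]; noncomm_ring
      rw [h5, e1]
      have h5b : u * v * (E * u) = u * (v * E) * u := by noncomm_ring
      rw [h5b, e4']
      have h6 : u * ((E + H - F) * v) * u = (u * E + u * H - u * F) * (v * u) := by noncomm_ring
      rw [h6, e1, e2', e3']
      have h7 : (E * u + (H - (E + E)) * u - (F + H - E) * u) * (v * u)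
          = (-F) * (u * v * u) := by noncomm_ring
      rw [h7, ← hw]
    rw [hwE, neg_mul, neg_neg]
  -- w is bijective
  have hwunit : IsUnit w := by
    rw [hw]
    exact ((texp_isUnit hPpos hP).mul (texp_isUnit hQpos hnF)).mul (texp_isUnit hPpos hP)
  have hwbij : Function.Bijective w := (Module.End.isUnit_iff w).mp hwunit
  -- transport kernels
  have hmap : Submodule.map w (LinearMap.ker E) = LinearMap.ker F := by
    ext y
    simp only [Submodule.mem_map, LinearMap.mem_ker]
    constructor
    · rintro ⟨x, hx, rfl⟩
      have hc : F (w x) = (F * w) x := rfl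
      rw [hc, hFw]
      simp only [LinearMap.neg_apply, Module.End.mul_apply, hx, map_zero, neg_zero]
    · intro hy
      obtain ⟨x, rfl⟩ := hwbij.surjective y
      refine ⟨x, ?_, rfl⟩
      have h2 : w * E = -(F * w) := by rw [hFw, neg_neg]
      have h3 : w (E x) = 0 := by
        have hc : w (E x) = (w * E) x := rfl
        rw [hc, h2]
        simp only [LinearMap.neg_apply, Module.End.mul_apply, hy, neg_zero]
      exact hwbij.injective (h3.trans (map_zero w).symm)
  let e : V ≃ₗ[ℂ] V := LinearEquiv.ofBijective w hwbij
  have hcoe : (e : V →ₗ[ℂ] V) = w := rfl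
  calc Module.finrank ℂ (LinearMap.ker E)
      = Module.finrank ℂ (Submodule.map (e : V →ₗ[ℂ] V) (LinearMap.ker E)) :=
        (LinearEquiv.finrank_map_eq e (LinearMap.ker E)).symm
    _ = Module.finrank ℂ (LinearMap.ker F) := by rw [hcoe, hmap]
end

section
/- Let V be a finite-dimensional representation of sl(2,ℂ) with standard basis (H,E,F). If every eigenvalue of the action of H on V is an even integer, then dim ker(E acting on V) = dim ker(H acting on V). -/
open Module LinearMap Finset

namespace Sl2CR

variable {V : Type*} [AddCommGroup V] [Module ℂ V]

section Rel

variable {H E F : Module.End ℂ V}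

lemma he_apply (hHE : ⁅H, E⁆ = (2 : ℂ) • E) (x : V) :
    H (E x) = E (H x) + (2 : ℂ) • E x := by
  have h := LinearMap.congr_fun hHE x
  simp only [Ring.lie_def, LinearMap.sub_apply, Module.End.mul_apply, LinearMap.smul_apply] at h
  rw [← h]; abel

lemma hf_apply (hHF : ⁅H, F⁆ = (-2 : ℂ) • F) (x : V) :
    H (F x) = F (H x) - (2 : ℂ) • F x := by
  have h := LinearMap.congr_fun hHF x
  simp only [Ring.lie_def, LinearMap.sub_apply, Module.End.mul_apply, LinearMap.smul_apply,
    neg_smul, LinearMap.neg_apply] at h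
  rw [sub_eq_iff_eq_add] at h
  rw [h]; abel

lemma ef_apply (hEF : ⁅E, F⁆ = H) (x : V) :
    E (F x) = F (E x) + H x := by
  have h := LinearMap.congr_fun hEF x
  simp only [Ring.lie_def, LinearMap.sub_apply, Module.End.mul_apply] at h
  rw [← h]; abel

/-- `H ∘ F^k = F^k ∘ H - 2k F^k` pointwise. -/
lemma h_pow_f (hHF : ⁅H, F⁆ = (-2 : ℂ) • F) (k : ℕ) (x : V) :
    H ((F ^ k) x) = (F ^ k) (H x) - ((2 * k : ℂ)) • (F ^ k) x := by
  induction k generalizing x with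
  | zero => simp
  | succ k ih =>
    rw [show ((F ^ (k+1)) x : V) = (F ^ k) (F x) from by rw [pow_succ]; rfl,
      ih (F x), hf_apply hHF x, map_sub, map_smul]
    simp only [show ∀ y : V, (F ^ (k+1)) y = (F ^ k) (F y) from fun y => by rw [pow_succ]; rfl]
    push_cast
    module

/-- `E ∘ F^(k+1) = F^(k+1) ∘ E + (k+1) F^k ∘ H - (k+1)k F^k` pointwise. -/
lemma e_pow_f (hHF : ⁅H, F⁆ = (-2 : ℂ) • F) (hEF : ⁅E, F⁆ = H) (k : ℕ) (x : V) :
    E ((F ^ (k+1)) x) = (F ^ (k+1)) (E x) + ((k : ℂ) + 1) • (F ^ k) (H x)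
      - (((k : ℂ) + 1) * (k : ℂ)) • (F ^ k) x := by
  induction k generalizing x with
  | zero => simpa using ef_apply hEF x
  | succ k ih =>
    rw [show ((F ^ (k+2)) x : V) = (F ^ (k+1)) (F x) from by rw [pow_succ]; rfl,
      ih (F x), ef_apply hEF x, hf_apply hHF x]
    simp only [map_add, map_sub, map_smul]
    rw [show ((F ^ (k+2)) (E x) : V) = (F ^ (k+1)) (F (E x)) from by rw [pow_succ]; rfl]
    simp only [show ∀ y : V, (F ^ (k+1)) y = (F ^ k) (F y) from fun y => by rw [pow_succ]; rfl]
    push_cast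
    module

end Rel


section Main

variable {H E F : Module.End ℂ V}

lemma h_string (hHF : ⁅H, F⁆ = (-2 : ℂ) • F) {μ : ℂ} {u : V} (huh : H u = μ • u) (j : ℕ) :
    H ((F ^ j) u) = (μ - 2 * j) • (F ^ j) u := by
  rw [h_pow_f hHF, huh, map_smul, sub_smul]

lemma e_string (hHF : ⁅H, F⁆ = (-2 : ℂ) • F) (hEF : ⁅E, F⁆ = H) {μ : ℂ} {u : V}
    (huh : H u = μ • u) (hue : E u = 0) (j : ℕ) :
    E ((F ^ (j+1)) u) = (((j : ℂ) + 1) * (μ - j)) • (F ^ j) u := by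
  rw [e_pow_f hHF hEF, huh, hue, map_zero, map_smul]
  module

lemma string_li (hHF : ⁅H, F⁆ = (-2 : ℂ) • F) {μ : ℂ} {u : V} (huh : H u = μ • u)
    {n : ℕ} (hne : ∀ j, j ≤ n → (F ^ j) u ≠ 0) :
    LinearIndependent ℂ (fun j : Fin (n+1) => (F ^ (j : ℕ)) u) := by
  apply Module.End.eigenvectors_linearIndependent' H (fun j : Fin (n+1) => μ - 2 * j)
  · intro i j hij
    have : (i : ℂ) = (j : ℂ) := by
      field_simp at hij
      have h' := sub_right_injective hij
      push_cast at h'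
      linear_combination h' / 2
    exact Fin.ext (by exact_mod_cast this)
  · intro j
    refine ⟨?_, hne j (by omega)⟩
    rw [Module.End.mem_eigenspace_iff]
    exact h_string hHF huh j

lemma string_exists [FiniteDimensional ℂ V]
    (hHF : ⁅H, F⁆ = (-2 : ℂ) • F) (hEF : ⁅E, F⁆ = H) {μ : ℂ} {u : V}
    (hu0 : u ≠ 0) (huh : H u = μ • u) (hue : E u = 0) :
    ∃ n : ℕ, μ = n ∧ (F ^ (n+1)) u = 0 ∧ ∀ j, j ≤ n → (F ^ j) u ≠ 0 := by
  classical
  have hex : ∃ k : ℕ, (F ^ (k+1)) u = 0 := by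
    by_contra hc
    push_neg at hc
    have hall : ∀ j : ℕ, (F ^ j) u ≠ 0 := by
      intro j
      cases j with
      | zero => simpa using hu0
      | succ m => exact hc m
    have hli : LinearIndependent ℂ (fun j : ℕ => (F ^ j) u) := by
      apply Module.End.eigenvectors_linearIndependent' H (fun j : ℕ => μ - 2 * j)
      · intro i j hij
        field_simp at hij
        have h' := sub_right_injective hij
        have h'' : ((i : ℕ) : ℂ) = j := by
          push_cast at h'
          linear_combination h' / 2
        exact_mod_cast h''
      · intro j
        exact ⟨Module.End.mem_eigenspace_iff.2 (h_string hHF huh j), hall j⟩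
    exact Module.Finite.not_linearIndependent_of_infinite _ hli
  refine ⟨Nat.find hex, ?_, Nat.find_spec hex, ?_⟩
  · have hne : (F ^ (Nat.find hex)) u ≠ 0 := by
      rcases Nat.eq_zero_or_pos (Nat.find hex) with h | h
      · rw [h]; simpa using hu0
      · obtain ⟨m, hm⟩ := Nat.exists_eq_succ_of_ne_zero h.ne'
        rw [hm]
        exact Nat.find_min hex (by omega)
    have h0 := e_string hHF hEF huh hue (Nat.find hex)
    rw [Nat.find_spec hex, map_zero, eq_comm, smul_eq_zero] at h0
    rcases h0 with h0 | h0
    · rcases mul_eq_zero.1 h0 with h1 | h1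
      · exact absurd h1 (Nat.cast_add_one_ne_zero _)
      · exact sub_eq_zero.1 h1
    · exact absurd h0 hne
  · intro j hj
    cases j with
    | zero => simpa using hu0
    | succ m => exact Nat.find_min hex (by omega)

lemma finrank_ker_eq_card {ι : Type*} [Fintype ι] (b : Basis ι ℂ V)
    (T : Module.End ℂ V) (μ : ι → ℂ) (τ : ι → ι)
    (hT : ∀ p, T (b p) = μ p • b (τ p)) (hτ : Set.InjOn τ {p | μ p ≠ 0}) :
    finrank ℂ (LinearMap.ker T) = Fintype.card {p // μ p = 0} := by
  classical
  have hker : LinearMap.ker T = Submodule.span ℂ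
      (Set.range (fun q : {p // μ p = 0} => b q.1)) := by
    apply le_antisymm
    · intro x hx
      have hx0 : T x = 0 := hx
      -- expand x in the basis
      have hrep : ∑ p : ι, b.repr x p • b p = x := b.sum_repr x
      have hTx : ∑ p : ι, (b.repr x p * μ p) • b (τ p) = 0 := by
        calc ∑ p : ι, (b.repr x p * μ p) • b (τ p)
            = ∑ p : ι, b.repr x p • (μ p • b (τ p)) := by
              simp [mul_smul]
          _ = ∑ p : ι, b.repr x p • T (b p) := by simp [hT]
          _ = T x := by
              conv_rhs => rw [← hrep]
              rw [map_sum]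
              simp
          _ = 0 := hx0
      -- restrict the sum to the support of μ
      have hsub : ∑ q : {p | μ p ≠ 0}, (b.repr x q.1 * μ q.1) • b (τ q.1) = 0 := by
        rw [← Finset.sum_subtype (Finset.univ.filter (fun p => μ p ≠ 0))
          (fun p => by simp) (fun p => (b.repr x p * μ p) • b (τ p))]
        rw [← hTx]
        apply Finset.sum_filter_of_ne
        intro p _ hne hμ
        rw [hμ, mul_zero, zero_smul] at hne
        exact hne rfl
      have hli : LinearIndependent ℂ (fun q : {p | μ p ≠ 0} => b (τ q.1)) := by
        apply b.linearIndependent.comp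
        intro q q' hqq
        exact Subtype.ext (hτ q.2 q'.2 hqq)
      have hz : ∀ q : {p | μ p ≠ 0}, b.repr x q.1 * μ q.1 = 0 :=
        Fintype.linearIndependent_iff.1 hli _ hsub
      have hz' : ∀ p : ι, μ p ≠ 0 → b.repr x p = 0 := by
        intro p hp
        rcases mul_eq_zero.1 (hz ⟨p, hp⟩) with h | h
        · exact h
        · exact absurd h hp
      rw [← hrep]
      apply Submodule.sum_mem
      intro p _
      by_cases hp : μ p = 0
      · exact Submodule.smul_mem _ _ (Submodule.subset_span ⟨⟨p, hp⟩, rfl⟩)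
      · rw [hz' p hp, zero_smul]; exact Submodule.zero_mem _
    · rw [Submodule.span_le]
      rintro y ⟨q, rfl⟩
      simp only [SetLike.mem_coe, LinearMap.mem_ker]
      rw [hT, q.2, zero_smul]
  rw [hker, finrank_span_eq_card]
  exact b.linearIndependent.comp _ Subtype.val_injective

/-- The Casimir operator `4FE + H² + 2H`. -/
noncomputable def Cas (H E F : Module.End ℂ V) : Module.End ℂ V :=
  (4 : ℂ) • (F * E) + H * H + (2 : ℂ) • H

lemma cas_apply (x : V) :
    Cas H E F x = (4 : ℂ) • F (E x) + H (H x) + (2 : ℂ) • H x := by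
  simp [Cas, Module.End.mul_apply]

lemma cas_comm_e (hHE : ⁅H, E⁆ = (2 : ℂ) • E) (hEF : ⁅E, F⁆ = H) (x : V) :
    Cas H E F (E x) = E (Cas H E F x) := by
  simp only [cas_apply, map_add, map_smul, he_apply hHE, ef_apply hEF, smul_add]
  module

lemma cas_comm_f (hHF : ⁅H, F⁆ = (-2 : ℂ) • F) (hEF : ⁅E, F⁆ = H) (x : V) :
    Cas H E F (F x) = F (Cas H E F x) := by
  simp only [cas_apply, map_add, map_smul, map_sub, hf_apply hHF, ef_apply hEF, smul_add,
    smul_sub]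
  module

lemma cas_comm_h (hHE : ⁅H, E⁆ = (2 : ℂ) • E) (hHF : ⁅H, F⁆ = (-2 : ℂ) • F) (x : V) :
    Cas H E F (H x) = H (Cas H E F x) := by
  simp only [cas_apply, map_add, map_smul, map_sub, he_apply hHE, hf_apply hHF, smul_add,
    smul_sub]
  module

lemma cas_prim {c : ℂ} {u : V} (huh : H u = c • u) (hue : E u = 0) :
    Cas H E F u = (c * c + 2 * c) • u := by
  rw [cas_apply, hue, map_zero, smul_zero, huh, map_smul, huh]
  module

lemma cas_pow_f (hHF : ⁅H, F⁆ = (-2 : ℂ) • F) (hEF : ⁅E, F⁆ = H) (j : ℕ) (x : V) :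
    Cas H E F ((F ^ j) x) = (F ^ j) (Cas H E F x) := by
  induction j generalizing x with
  | zero => simp
  | succ j ih =>
    rw [show ((F ^ (j+1)) x : V) = (F ^ j) (F x) from by rw [pow_succ]; rfl, ih,
      cas_comm_f hHF hEF, show ∀ y : V, (F ^ (j+1)) y = (F ^ j) (F y) from
        fun y => by rw [pow_succ]; rfl]

/-- The span of the string `u, Fu, F²u, …, Fⁿu`. -/
noncomputable def strS (F : Module.End ℂ V) (n : ℕ) (u : V) : Submodule ℂ V :=
  Submodule.span ℂ (Set.range (fun j : Fin (n+1) => (F ^ (j : ℕ)) u))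

section StrS

variable (n : ℕ) (u : V)

lemma sum_mem_strS (c : ℕ → ℂ) : ∑ j ∈ range (n+1), c j • (F ^ j) u ∈ strS F n u := by
  apply Submodule.sum_mem
  intro j hj
  exact Submodule.smul_mem _ _ (Submodule.subset_span ⟨⟨j, mem_range.1 hj⟩, rfl⟩)

lemma mem_strS_iff {x : V} :
    x ∈ strS F n u ↔ ∃ c : ℕ → ℂ, x = ∑ j ∈ range (n+1), c j • (F ^ j) u := by
  constructor
  · intro hx
    obtain ⟨c, hc⟩ := (Submodule.mem_span_range_iff_exists_fun ℂ).1 hx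
    classical
    refine ⟨fun j => if h : j < n + 1 then c ⟨j, h⟩ else 0, ?_⟩
    rw [← hc, Finset.sum_range]
    apply Finset.sum_congr rfl
    intro j _
    simp [j.isLt]
  · rintro ⟨c, rfl⟩
    exact sum_mem_strS n u c

variable {n u}

lemma coords_unique (hli : LinearIndependent ℂ (fun j : Fin (n+1) => (F ^ (j : ℕ)) u))
    {c d : ℕ → ℂ}
    (h : ∑ j ∈ range (n+1), c j • (F ^ j) u = ∑ j ∈ range (n+1), d j • (F ^ j) u) :
    ∀ j, j < n + 1 → c j = d j := by
  have h0 : ∑ j : Fin (n+1), (c j - d j) • (F ^ (j : ℕ)) u = 0 := by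
    simp only [sub_smul, Finset.sum_sub_distrib]
    rw [← Finset.sum_range (fun j => c j • (F ^ j) u), ← Finset.sum_range
      (fun j => d j • (F ^ j) u), h, sub_self]
  have := Fintype.linearIndependent_iff.1 hli _ h0
  intro j hj
  have := this ⟨j, hj⟩
  simpa [sub_eq_zero] using this

variable (hHF : ⁅H, F⁆ = (-2 : ℂ) • F) (hEF : ⁅E, F⁆ = H)
variable {μ : ℂ} (huh : H u = (n : ℂ) • u) (hue : E u = 0) (huf : (F ^ (n+1)) u = 0)

include hHF huh in
lemma h_sum_coords (c : ℕ → ℂ) :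
    H (∑ j ∈ range (n+1), c j • (F ^ j) u)
      = ∑ j ∈ range (n+1), ((((n : ℂ)) - 2 * j) * c j) • (F ^ j) u := by
  rw [map_sum]
  apply Finset.sum_congr rfl
  intro j _
  rw [map_smul, h_string hHF huh j, smul_smul, mul_comm (c j)]

include hHF hEF huh hue in
lemma e_sum_coords (c : ℕ → ℂ) :
    E (∑ j ∈ range (n+1), c j • (F ^ j) u)
      = ∑ j ∈ range (n+1),
          ((if j < n then ((j : ℂ) + 1) * ((n : ℂ) - j) else 0) * c (j+1)) • (F ^ j) u := by
  rw [map_sum]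
  simp only [map_smul]
  rw [Finset.sum_range_succ' (fun j => c j • E ((F ^ j) u))]
  rw [Finset.sum_range_succ (f := fun j =>
    ((if j < n then ((j : ℂ) + 1) * ((n : ℂ) - j) else 0) * c (j+1)) • (F ^ j) u)]
  simp only [pow_zero, Module.End.one_apply, hue, smul_zero, add_zero, if_neg (lt_irrefl n),
    zero_mul, zero_smul]
  apply Finset.sum_congr rfl
  intro j hj
  rw [e_string hHF hEF huh hue j, if_pos (mem_range.1 hj), smul_smul, mul_comm (c (j+1))]

include hHF huh in
lemma strS_h_mem {x : V} (hx : x ∈ strS F n u) : H x ∈ strS F n u := by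
  obtain ⟨c, rfl⟩ := (mem_strS_iff n u).1 hx
  rw [h_sum_coords hHF huh]
  exact sum_mem_strS n u _

include hHF hEF huh hue in
lemma strS_e_mem {x : V} (hx : x ∈ strS F n u) : E x ∈ strS F n u := by
  obtain ⟨c, rfl⟩ := (mem_strS_iff n u).1 hx
  rw [e_sum_coords hHF hEF huh hue]
  exact sum_mem_strS n u _

include huf in
lemma strS_f_mem {x : V} (hx : x ∈ strS F n u) : F x ∈ strS F n u := by
  obtain ⟨c, rfl⟩ := (mem_strS_iff n u).1 hx
  rw [map_sum]
  apply Submodule.sum_mem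
  intro j hj
  rw [map_smul]
  have hFj : F ((F ^ j) u) = (F ^ (j+1)) u := by rw [pow_succ']; rfl
  rw [hFj]
  rcases Nat.lt_or_ge (j+1) (n+1) with h | h
  · exact Submodule.smul_mem _ _ (Submodule.subset_span ⟨⟨j+1, h⟩, rfl⟩)
  · have hj1 : j + 1 = n + 1 := by have := mem_range.1 hj; omega
    rw [hj1, huf, smul_zero]
    exact Submodule.zero_mem _

include huf in
lemma strS_f_pow_mem (k : ℕ) {x : V} (hx : x ∈ strS F n u) : (F ^ k) x ∈ strS F n u := by
  induction k with
  | zero => simpa using hx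
  | succ k ih =>
    rw [show ((F ^ (k+1)) x : V) = F ((F ^ k) x) from by rw [pow_succ']; rfl]
    exact strS_f_mem huf ih

end StrS

section Lift

variable {H E F : Module.End ℂ V}
variable (hHE : ⁅H, E⁆ = (2 : ℂ) • E) (hHF : ⁅H, F⁆ = (-2 : ℂ) • F) (hEF : ⁅E, F⁆ = H)

include hHE hHF hEF in
/-- Key lifting lemma: a vector which is primitive of weight `m` modulo the string
submodule `S` generated by a primitive vector of weight `n` can be corrected by an
element of `S` to a genuine primitive vector of weight `m`. -/
lemma lift_primitive {n : ℕ} {u : V} (huh : H u = (n : ℂ) • u) (hue : E u = 0)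
    (huf : (F ^ (n+1)) u = 0) (hun : (F ^ n) u ≠ 0)
    (hli : LinearIndependent ℂ (fun j : Fin (n+1) => (F ^ (j : ℕ)) u))
    {m : ℕ} {w : V} (hw1 : H w - (m : ℂ) • w ∈ strS F n u) (hw2 : E w ∈ strS F n u)
    (hw3 : (F ^ (m+1)) w ∈ strS F n u) :
    ∃ s ∈ strS F n u, H (w - s) = (m : ℂ) • (w - s) ∧ E (w - s) = 0 := by
  classical
  by_cases hmn : m = n
  · -- the hard case `m = n`
    subst hmn
    obtain ⟨ca, hca⟩ := (mem_strS_iff m u).1 hw1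
    obtain ⟨cb, hcb⟩ := (mem_strS_iff m u).1 hw2
    have hden : ∀ j : ℕ, j < m → ((j : ℂ) + 1) * ((m : ℂ) - j) ≠ 0 := by
      intro j hj h
      rcases mul_eq_zero.1 h with h1 | h1
      · exact Nat.cast_add_one_ne_zero j h1
      · rw [sub_eq_zero] at h1
        have : m = j := by exact_mod_cast h1
        omega
    -- the weight-raising relation transported to coordinates
    have hrel : (∑ j ∈ range (m+1), ((((m : ℂ) - 2*j) - ((m : ℂ)+2)) * cb j) • (F ^ j) u)
        = ∑ j ∈ range (m+1),
            ((if j < m then ((j : ℂ) + 1) * ((m : ℂ) - j) else 0) * ca (j+1)) • (F ^ j) u := by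
      have h0 : H (E w) - ((m : ℂ) + 2) • E w = E (H w - (m : ℂ) • w) := by
        rw [he_apply hHE, map_sub, map_smul]
        module
      rw [hca, hcb, h_sum_coords hHF huh, e_sum_coords hHF hEF huh hue] at h0
      rw [← h0, Finset.smul_sum, ← Finset.sum_sub_distrib]
      apply Finset.sum_congr rfl
      intro j _
      rw [smul_smul, ← sub_smul]
      congr 1
      ring
    have hrel2 := coords_unique hli hrel
    -- top coordinate of `E w` vanishes
    have hcbm : cb m = 0 := by
      have h1 := hrel2 m (by omega)
      rw [if_neg (lt_irrefl m), zero_mul] at h1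
      rcases mul_eq_zero.1 h1 with h | h
      · exfalso
        have h8 : ((2*m+2 : ℕ) : ℂ) = 0 := by push_cast; linear_combination -h
        rw [Nat.cast_eq_zero] at h8
        omega
      · exact h
    -- the first correction, killing `E w`
    set cs : ℕ → ℂ := fun j =>
      if h1 : 1 ≤ j ∧ j ≤ m then cb (j-1) / ((j : ℂ) * ((m : ℂ) + 1 - j)) else 0 with hcs
    set s' : V := ∑ j ∈ range (m+1), cs j • (F ^ j) u with hs'
    have hs'S : s' ∈ strS F m u := sum_mem_strS m u cs
    have hEs' : E s' = E w := by
      rw [hs', e_sum_coords hHF hEF huh hue, hcb]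
      apply Finset.sum_congr rfl
      intro j hj
      rcases Nat.lt_or_ge j m with h | h
      · rw [if_pos h]
        have hcsj : cs (j+1) = cb j / (((j : ℂ) + 1) * ((m : ℂ) - j)) := by
          simp only [hcs]
          rw [dif_pos ⟨(by omega : 1 ≤ j + 1), (by omega : j + 1 ≤ m)⟩]
          simp only [Nat.add_sub_cancel]
          congr 1
          push_cast
          ring
        rw [hcsj, mul_div_cancel₀ _ (hden j h)]
      · have hjm : j = m := by have := mem_range.1 hj; omega
        rw [hjm, if_neg (lt_irrefl m), zero_mul, hcbm]
    set w₁ : V := w - s' with hw₁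
    have hEw₁ : E w₁ = 0 := by rw [hw₁, map_sub, hEs', sub_self]
    -- coordinates of `H w₁ - m w₁`
    set ca1 : ℕ → ℂ := fun j => ca j + 2 * j * cs j with hca1
    have ha₁ : H w₁ - (m : ℂ) • w₁ = ∑ j ∈ range (m+1), ca1 j • (F ^ j) u := by
      have h1 : H w₁ - (m : ℂ) • w₁
          = (H w - (m : ℂ) • w) - (H s' - (m : ℂ) • s') := by
        rw [hw₁, map_sub]
        module
      rw [h1, hca, hs', h_sum_coords hHF huh, Finset.smul_sum, ← Finset.sum_sub_distrib,
        ← Finset.sum_sub_distrib]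
      apply Finset.sum_congr rfl
      intro j _
      simp only [hca1]
      match_scalars
      ring
    have hEa₁ : E (H w₁ - (m : ℂ) • w₁) = 0 := by
      have h2 : E (H w₁) = H (E w₁) - (2 : ℂ) • E w₁ := by
        rw [he_apply hHE]
        module
      rw [map_sub, map_smul, h2, hEw₁, map_zero, smul_zero, smul_zero]
      simp
    have hca1z : ∀ j, 1 ≤ j → j ≤ m → ca1 j = 0 := by
      have hsum : (∑ j ∈ range (m+1),
            ((if j < m then ((j : ℂ) + 1) * ((m : ℂ) - j) else 0) * ca1 (j+1)) • (F ^ j) u)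
          = ∑ j ∈ range (m+1), (0 : ℂ) • (F ^ j) u := by
        rw [← e_sum_coords hHF hEF huh hue ca1, ← ha₁, hEa₁]
        symm
        apply Finset.sum_eq_zero
        intro j _
        rw [zero_smul]
      have h3 := coords_unique hli hsum
      intro j h1 hm
      have h4 := h3 (j-1) (by omega)
      rw [if_pos (by omega : j - 1 < m), show j - 1 + 1 = j from by omega] at h4
      rcases mul_eq_zero.1 h4 with h | h
      · exact absurd h (hden (j-1) (by omega))
      · exact h
    have ha₁' : H w₁ - (m : ℂ) • w₁ = ca 0 • u := by
      rw [ha₁, Finset.sum_range_succ' (fun j => ca1 j • (F ^ j) u)]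
      have hz1 : ∀ j ∈ range m, ca1 (j+1) • (F ^ (j+1)) u = 0 := by
        intro j hj
        rw [hca1z (j+1) (by omega) (by have := mem_range.1 hj; omega), zero_smul]
      rw [Finset.sum_congr rfl hz1, Finset.sum_const_zero, zero_add]
      have hca10 : ca1 0 = ca 0 := by
        simp [hca1, hcs]
      rw [hca10]
      simp
    by_cases hc0 : ca 0 = 0
    · refine ⟨s', hs'S, ?_, hEw₁⟩
      have h5 : H w₁ - (m : ℂ) • w₁ = 0 := by rw [ha₁', hc0, zero_smul]
      rw [sub_eq_zero] at h5
      rw [← hw₁]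
      exact h5
    · exfalso
      set v' : V := (ca 0)⁻¹ • w₁ with hv'
      have hv'H : H v' = (m : ℂ) • v' + u := by
        have h4 : H w₁ = (m : ℂ) • w₁ + ca 0 • u := sub_eq_iff_eq_add'.mp ha₁'
        rw [hv', map_smul, h4, smul_add, smul_smul ((ca 0)⁻¹) (ca 0), inv_mul_cancel₀ hc0,
          one_smul, smul_comm]
      have hv'E : E v' = 0 := by rw [hv', map_smul, hEw₁, smul_zero]
      set z : V := (F ^ (m+1)) v' with hz
      have hzS : z ∈ strS F m u := by
        rw [hz, hv', map_smul]
        apply Submodule.smul_mem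
        rw [hw₁, map_sub]
        exact Submodule.sub_mem _ hw3 (strS_f_pow_mem huf (m+1) hs'S)
      have hzH : H z = (-(m : ℂ) - 2) • z := by
        rw [hz, h_pow_f hHF (m+1) v', hv'H, map_add, map_smul, huf, add_zero]
        push_cast
        module
      have hz0 : z = 0 := by
        obtain ⟨cz, hcz⟩ := (mem_strS_iff m u).1 hzS
        have hsum2 : (∑ j ∈ range (m+1), ((((m : ℂ) - 2 * j)) * cz j) • (F ^ j) u)
            = ∑ j ∈ range (m+1), ((-(m : ℂ) - 2) * cz j) • (F ^ j) u := by
          rw [← h_sum_coords hHF huh, ← hcz, hzH, hcz, Finset.smul_sum]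
          apply Finset.sum_congr rfl
          intro j _
          rw [smul_smul]
        have h5 := coords_unique hli hsum2
        have h6 : ∀ j, j < m + 1 → cz j = 0 := by
          intro j hj
          have h7 : (((m : ℂ) - 2 * j) - (-(m : ℂ) - 2)) * cz j = 0 := by
            rw [sub_mul, h5 j hj, sub_self]
          rcases mul_eq_zero.1 h7 with h | h
          · exfalso
            have h8 : ((2 * m + 2 - 2 * j : ℕ) : ℂ) = 0 := by
              push_cast [Nat.cast_sub (by omega : 2 * j ≤ 2 * m + 2)]
              linear_combination h
            rw [Nat.cast_eq_zero] at h8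
            omega
          · exact h
        rw [hcz]
        apply Finset.sum_eq_zero
        intro j hj
        rw [h6 j (mem_range.1 hj), zero_smul]
      have h9 := e_pow_f hHF hEF m v'
      rw [← hz, hz0, map_zero, hv'E, map_zero, hv'H, map_add, map_smul] at h9
      have h10 : ((m : ℂ) + 1) • (F ^ m) u = 0 := by
        rw [zero_add, smul_add, smul_smul] at h9
        linear_combination (norm := module) -h9
      rcases smul_eq_zero.1 h10 with h | h
      · exact Nat.cast_add_one_ne_zero m h
      · exact hun h
  · -- the easy case `m ≠ n`, using the Casimir operator
    set cm : ℂ := (m : ℂ) * m + 2 * m with hcm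
    set cn : ℂ := (n : ℂ) * n + 2 * n with hcn
    have hc : cm - cn ≠ 0 := by
      intro h
      have h1 : ((m : ℂ) - n) * ((m : ℂ) + n + 2) = 0 := by
        rw [hcm, hcn] at h
        linear_combination h
      rcases mul_eq_zero.1 h1 with h2 | h2
      · rw [sub_eq_zero] at h2
        exact hmn (by exact_mod_cast h2)
      · have : ((m + n + 2 : ℕ) : ℂ) = 0 := by push_cast; linear_combination h2
        rw [Nat.cast_eq_zero] at this
        omega
    have hCS : ∀ x ∈ strS F n u, Cas H E F x = cn • x := by
      intro x hx
      obtain ⟨c, rfl⟩ := (mem_strS_iff n u).1 hx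
      rw [map_sum, Finset.smul_sum]
      apply Finset.sum_congr rfl
      intro j _
      rw [map_smul, cas_pow_f hHF hEF, cas_prim huh hue, map_smul, smul_comm]
    set a : V := H w - (m : ℂ) • w with ha
    have haS : a ∈ strS F n u := hw1
    have hHw : H w = (m : ℂ) • w + a := by rw [ha]; abel
    have hCw : Cas H E F w - cm • w ∈ strS F n u := by
      have key : Cas H E F w - cm • w
          = (4 : ℂ) • F (E w) + ((m : ℂ) + 2) • a + H a := by
        rw [cas_apply, hHw, map_add, map_smul, hHw, hcm]
        module
      rw [key]
      exact Submodule.add_mem _ (Submodule.add_mem _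
        (Submodule.smul_mem _ _ (strS_f_mem huf hw2))
        (Submodule.smul_mem _ _ haS)) (strS_h_mem hHF huh haS)
    set v : V := (cm - cn)⁻¹ • (Cas H E F w - cn • w) with hv
    have hHv : H v = (m : ℂ) • v := by
      have h1 : H (Cas H E F w) = (m : ℂ) • Cas H E F w + cn • a := by
        rw [← cas_comm_h hHE hHF, hHw, map_add, map_smul, hCS a haS]
      rw [hv, map_smul, map_sub, map_smul, h1, hHw]
      module
    have hEv : E v = 0 := by
      rw [hv, map_smul, map_sub, map_smul, ← cas_comm_e hHE hEF, hCS _ hw2, sub_self,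
        smul_zero]
    refine ⟨w - v, ?_, ?_, ?_⟩
    · have key2 : w - v = (-(cm - cn)⁻¹) • (Cas H E F w - cm • w) := by
        rw [hv]
        match_scalars <;> field_simp <;> ring
      rw [key2]
      exact Submodule.smul_mem _ _ hCw
    · rw [sub_sub_cancel]
      exact hHv
    · rw [sub_sub_cancel]
      exact hEv

end Lift

section Quot

variable (S : Submodule ℂ V)

/-- The endomorphism induced on the quotient by an endomorphism preserving `S`. -/
noncomputable def qmap (T : Module.End ℂ V) (hT : ∀ x ∈ S, T x ∈ S) :
    Module.End ℂ (V ⧸ S) :=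
  S.mapQ S T (fun x hx => hT x hx)

lemma qmap_mk (T : Module.End ℂ V) (hT : ∀ x ∈ S, T x ∈ S) (x : V) :
    qmap S T hT (S.mkQ x) = S.mkQ (T x) := by
  simp [qmap, Submodule.mapQ_apply]

lemma qmap_pow_mk (T : Module.End ℂ V) (hT : ∀ x ∈ S, T x ∈ S) (k : ℕ) (x : V) :
    ((qmap S T hT) ^ k) (S.mkQ x) = S.mkQ ((T ^ k) x) := by
  induction k generalizing x with
  | zero => simp
  | succ k ih =>
    rw [show (((qmap S T hT) ^ (k+1)) (S.mkQ x) : V ⧸ S)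
        = ((qmap S T hT) ^ k) (qmap S T hT (S.mkQ x)) from by rw [pow_succ]; rfl,
      qmap_mk, ih, show ((T ^ (k+1)) x : V) = (T ^ k) (T x) from by rw [pow_succ]; rfl]

lemma qmap_lie (A B D : Module.End ℂ V) (hA : ∀ x ∈ S, A x ∈ S) (hB : ∀ x ∈ S, B x ∈ S)
    (hD : ∀ x ∈ S, D x ∈ S) (c : ℂ) (h : ⁅A, B⁆ = c • D) :
    ⁅qmap S A hA, qmap S B hB⁆ = c • qmap S D hD := by
  refine Submodule.linearMap_qext _ ?_
  ext x
  have hx := LinearMap.congr_fun h x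
  simp only [Ring.lie_def, LinearMap.sub_apply, Module.End.mul_apply,
    LinearMap.smul_apply] at hx ⊢
  simp only [LinearMap.comp_apply, Submodule.mkQ_apply]
  rw [show ∀ y : V, (Submodule.Quotient.mk y : V ⧸ S) = S.mkQ y from fun _ => rfl]
  simp only [LinearMap.sub_apply, Module.End.mul_apply, LinearMap.smul_apply]
  rw [qmap_mk, qmap_mk, qmap_mk, qmap_mk, qmap_mk, ← map_smul, ← map_sub, hx]

end Quot

end Main

universe u

/-- The trivial case of the structure theorem. -/
lemma strung_trivial {V : Type u} [AddCommGroup V] [Module ℂ V] (hV : Subsingleton V)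
    (H E F : Module.End ℂ V) :
    ∃ (ι : Type) (_ : Fintype ι) (n : ι → ℕ) (v : ι → V),
      (∀ i, H (v i) = (n i : ℂ) • v i) ∧ (∀ i, E (v i) = 0) ∧
      (∀ i, (F ^ (n i + 1)) (v i) = 0) ∧
      LinearIndependent ℂ (fun p : (Σ i : ι, Fin (n i + 1)) => (F ^ (p.2 : ℕ)) (v p.1)) ∧
      Submodule.span ℂ
        (Set.range (fun p : (Σ i : ι, Fin (n i + 1)) => (F ^ (p.2 : ℕ)) (v p.1))) = ⊤ := by
  refine ⟨Empty, inferInstance, fun i => i.elim, fun i => i.elim, fun i => i.elim,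
    fun i => i.elim, fun i => i.elim, ?_, ?_⟩
  · haveI : IsEmpty (Σ i : Empty, Fin ((i.elim : ℕ) + 1)) := ⟨fun p => p.1.elim⟩
    exact linearIndependent_empty_type
  · rw [eq_top_iff]
    intro x _
    rw [Subsingleton.elim x 0]
    exact Submodule.zero_mem _

/-- Complete reducibility: every finite-dimensional representation of `sl₂` over `ℂ`
is a direct sum of strings generated by primitive vectors. -/
lemma strung : ∀ (d : ℕ) (V : Type u) [AddCommGroup V] [Module ℂ V],
    ∀ [FiniteDimensional ℂ V], finrank ℂ V ≤ d →
    ∀ (H E F : Module.End ℂ V), ⁅H, E⁆ = (2 : ℂ) • E → ⁅H, F⁆ = (-2 : ℂ) • F → ⁅E, F⁆ = H →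
    ∃ (ι : Type) (_ : Fintype ι) (n : ι → ℕ) (v : ι → V),
      (∀ i, H (v i) = (n i : ℂ) • v i) ∧ (∀ i, E (v i) = 0) ∧
      (∀ i, (F ^ (n i + 1)) (v i) = 0) ∧
      LinearIndependent ℂ (fun p : (Σ i : ι, Fin (n i + 1)) => (F ^ (p.2 : ℕ)) (v p.1)) ∧
      Submodule.span ℂ
        (Set.range (fun p : (Σ i : ι, Fin (n i + 1)) => (F ^ (p.2 : ℕ)) (v p.1))) = ⊤ := by
  intro d
  induction d with
  | zero =>
    intro V _ _ _ hd H E F _ _ _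
    exact strung_trivial (by rwa [Nat.le_zero, finrank_zero_iff] at hd) H E F
  | succ d ih =>
    intro V _ _ _ hd H E F hHE hHF hEF
    by_cases hV : finrank ℂ V = 0
    · exact strung_trivial (by rwa [finrank_zero_iff] at hV) H E F
    haveI : Nontrivial V := by
      rw [← Module.finrank_pos_iff (R := ℂ)]
      omega
    -- `E` has nontrivial kernel
    have hker : LinearMap.ker E ≠ ⊥ := by
      intro hbot
      have hinj : Function.Injective E := LinearMap.ker_eq_bot.1 hbot
      have hsurj := (LinearMap.injective_iff_surjective).1 hinj
      let e' := LinearEquiv.ofBijective E ⟨hinj, hsurj⟩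
      set Es : Module.End ℂ V := (e'.symm : V →ₗ[ℂ] V) with hEs
      have hE1 : E * Es = 1 := by
        ext x
        have : E (e'.symm x) = e' (e'.symm x) := rfl
        simp [hEs, Module.End.mul_apply, this]
      have hE2 : Es * E = 1 := by
        ext x
        have : E x = e' x := rfl
        simp [hEs, Module.End.mul_apply, this]
      have htr := congrArg (LinearMap.trace ℂ V) (congrArg (· * Es) hHE)
      simp only [Ring.lie_def] at htr
      have h1 : (H * E - E * H) * Es = H * (E * Es) - E * (H * Es) := by noncomm_ring
      have h2 : ((2:ℂ) • E) * Es = (2:ℂ) • (E * Es) := by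
        rw [smul_mul_assoc]
      rw [h1, h2, hE1, mul_one, map_sub, map_smul, LinearMap.trace_one] at htr
      have h3 : LinearMap.trace ℂ V (E * (H * Es)) = LinearMap.trace ℂ V H := by
        rw [LinearMap.trace_mul_comm, mul_assoc, hE2, mul_one]
      rw [h3, sub_self] at htr
      have h4 : (finrank ℂ V : ℂ) = 0 := by
        have h5 : (2 : ℂ) ≠ 0 := two_ne_zero
        simpa [h5] using htr.symm
      rw [Nat.cast_eq_zero] at h4
      exact hV h4
    -- a primitive vector
    haveI : Nontrivial (LinearMap.ker E) := Submodule.nontrivial_iff_ne_bot.2 hker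
    have hKH : ∀ x ∈ LinearMap.ker E, H x ∈ LinearMap.ker E := by
      intro x hx
      rw [LinearMap.mem_ker] at hx ⊢
      have h6 : E (H x) = H (E x) - (2:ℂ) • E x := by
        rw [he_apply hHE]
        module
      rw [h6, hx, map_zero, smul_zero, sub_zero]
    obtain ⟨μ, hμ⟩ := Module.End.exists_eigenvalue (H.restrict hKH)
    obtain ⟨u', hu'⟩ := hμ.exists_hasEigenvector
    set u : V := (u' : V) with hu
    have hu0 : u ≠ 0 := by
      intro h
      exact hu'.2 (Subtype.ext h)
    have huh : H u = μ • u := by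
      have := congrArg (Subtype.val) hu'.apply_eq_smul
      simpa [hu, LinearMap.restrict_apply] using this
    have hue : E u = 0 := u'.2
    obtain ⟨n, hμn, huf, hne⟩ := string_exists hHF hEF hu0 huh hue
    rw [hμn] at huh
    have hli := string_li hHF huh hne
    have hun : (F ^ n) u ≠ 0 := hne n le_rfl
    set S : Submodule ℂ V := strS F n u with hS
    have hSH : ∀ x ∈ S, H x ∈ S := fun x hx => strS_h_mem hHF huh hx
    have hSE : ∀ x ∈ S, E x ∈ S := fun x hx => strS_e_mem hHF hEF huh hue hx
    have hSF : ∀ x ∈ S, F x ∈ S := fun x hx => strS_f_mem huf hx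
    have hfs : finrank ℂ S = n + 1 := by
      have := finrank_span_eq_card hli
      rw [hS, strS]
      simpa using this
    have hq : finrank ℂ (V ⧸ S) + (n+1) = finrank ℂ V := by
      rw [← hfs]
      exact S.finrank_quotient_add_finrank
    have hqle : finrank ℂ (V ⧸ S) ≤ d := by omega
    have hEF1 : ⁅E, F⁆ = (1:ℂ) • H := by rw [one_smul]; exact hEF
    have hHEb := qmap_lie S H E E hSH hSE hSE 2 hHE
    have hHFb := qmap_lie S H F F hSH hSF hSF (-2) hHF
    have hEFb := qmap_lie S E F H hSE hSF hSH 1 hEF1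
    rw [one_smul] at hEFb
    obtain ⟨ι, instι, nn, vb, hb1, hb2, hb3, hb4, hb5⟩ :=
      ih (V ⧸ S) hqle (qmap S H hSH) (qmap S E hSE) (qmap S F hSF) hHEb hHFb hEFb
    -- lift the primitive vectors of the quotient
    have hlift : ∀ i : ι, ∃ wv : V,
        S.mkQ wv = vb i ∧ H wv = (nn i : ℂ) • wv ∧ E wv = 0 := by
      intro i
      obtain ⟨w₀, hw₀⟩ := S.mkQ_surjective (vb i)
      have hw1 : H w₀ - (nn i : ℂ) • w₀ ∈ S := by
        rw [← Submodule.Quotient.mk_eq_zero S]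
        show S.mkQ _ = 0
        rw [map_sub, map_smul, ← qmap_mk S H hSH, hw₀, hb1 i, sub_self]
      have hw2 : E w₀ ∈ S := by
        rw [← Submodule.Quotient.mk_eq_zero S]
        show S.mkQ _ = 0
        rw [← qmap_mk S E hSE, hw₀, hb2 i]
      have hw3 : (F ^ (nn i + 1)) w₀ ∈ S := by
        rw [← Submodule.Quotient.mk_eq_zero S]
        show S.mkQ _ = 0
        rw [← qmap_pow_mk S F hSF, hw₀, hb3 i]
      obtain ⟨s, hsS, hp1, hp2⟩ := lift_primitive hHE hHF hEF huh hue huf hun hli hw1 hw2 hw3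
      refine ⟨w₀ - s, ?_, hp1, hp2⟩
      rw [map_sub, show S.mkQ s = 0 from (Submodule.Quotient.mk_eq_zero S).2 hsS, sub_zero,
        hw₀]
    choose v hv1 hv2 hv3 using hlift
    have hvbne : ∀ i, vb i ≠ 0 := by
      intro i
      have := hb4.ne_zero ⟨i, 0⟩
      simpa using this
    have hvne : ∀ i, v i ≠ 0 := fun i h => hvbne i (by rw [← hv1 i, h, map_zero])
    have hv4 : ∀ i, (F ^ (nn i + 1)) (v i) = 0 := by
      intro i
      obtain ⟨n', hn', hF0, _⟩ := string_exists hHF hEF (hvne i) (hv2 i) (hv3 i)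
      have hn'' : n' = nn i := by exact_mod_cast hn'.symm
      rwa [hn''] at hF0
    classical
    refine ⟨Option ι, inferInstance, fun o => o.elim n nn, fun o => o.elim u v,
      ?_, ?_, ?_, ?_, ?_⟩
    · rintro (_ | i)
      · exact huh
      · exact hv2 i
    · rintro (_ | i)
      · exact hue
      · exact hv3 i
    · rintro (_ | i)
      · exact huf
      · exact hv4 i
    · -- linear independence of the combined family
      rw [Fintype.linearIndependent_iff]
      intro c hc
      rw [← Finset.univ_sigma_univ, Finset.sum_sigma] at hc
      rw [univ_option ι, Finset.sum_insertNone] at hc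
      set A : V := ∑ j : Fin (n+1), c ⟨none, j⟩ • (F ^ (j : ℕ)) u with hA
      set B : V := ∑ i : ι, ∑ j : Fin (nn i + 1), c ⟨some i, j⟩ • (F ^ (j : ℕ)) (v i) with hB
      have hcAB : A + B = 0 := hc
      have hmkB : S.mkQ B = ∑ i : ι, ∑ j : Fin (nn i + 1),
          c ⟨some i, j⟩ • ((qmap S F hSF) ^ (j : ℕ)) (vb i) := by
        rw [hB, map_sum]
        apply Finset.sum_congr rfl
        intro i _
        rw [map_sum]
        apply Finset.sum_congr rfl
        intro j _
        rw [map_smul, ← qmap_pow_mk S F hSF, hv1]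
      have hAS : A ∈ S := by
        rw [hA]
        exact sum_mem (fun j _ => Submodule.smul_mem _ _
          (Submodule.subset_span ⟨j, rfl⟩))
      have hmk0 : S.mkQ B = 0 := by
        have h7 : S.mkQ A = 0 := (Submodule.Quotient.mk_eq_zero S).2 hAS
        have := congrArg S.mkQ hcAB
        rw [map_add, h7, zero_add, map_zero] at this
        exact this
      have hsome : ∀ (p : Σ i : ι, Fin (nn i + 1)), c ⟨some p.1, p.2⟩ = 0 := by
        apply Fintype.linearIndependent_iff.1 hb4
        rw [← Finset.univ_sigma_univ, Finset.sum_sigma]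
        rw [← hmk0, hmkB]
      have hBzero : B = 0 := by
        rw [hB]
        apply Finset.sum_eq_zero
        intro i _
        apply Finset.sum_eq_zero
        intro j _
        rw [hsome ⟨i, j⟩, zero_smul]
      have hA0 : A = 0 := by rw [hBzero, add_zero] at hcAB; exact hcAB
      have hnone : ∀ j : Fin (n+1), c ⟨none, j⟩ = 0 :=
        Fintype.linearIndependent_iff.1 hli _ (hA.symm.trans hA0)
      rintro ⟨(_ | i), j⟩
      · exact hnone j
      · exact hsome ⟨i, j⟩
    · -- spanning
      rw [eq_top_iff]
      intro x _
      have hx : S.mkQ x ∈ Submodule.span ℂ (Set.range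
          (fun p : (Σ i : ι, Fin (nn i + 1)) =>
            ((qmap S F hSF) ^ (p.2 : ℕ)) (vb p.1))) := by
        rw [hb5]; trivial
      obtain ⟨cq, hcq⟩ := (Submodule.mem_span_range_iff_exists_fun ℂ).1 hx
      set y : V := ∑ p : (Σ i : ι, Fin (nn i + 1)), cq p • (F ^ (p.2 : ℕ)) (v p.1) with hy
      have hyspan : y ∈ Submodule.span ℂ (Set.range
          (fun p : (Σ o : Option ι, Fin ((o.elim n nn) + 1)) =>
            (F ^ (p.2 : ℕ)) ((p.1.elim u v)))) := by
        rw [hy]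
        apply sum_mem
        intro p _
        exact Submodule.smul_mem _ _ (Submodule.subset_span ⟨⟨some p.1, p.2⟩, rfl⟩)
      have hxy : x - y ∈ S := by
        rw [← Submodule.Quotient.mk_eq_zero S]
        show S.mkQ _ = 0
        rw [map_sub, sub_eq_zero, hy, map_sum, ← hcq]
        apply Finset.sum_congr rfl
        intro p _
        rw [map_smul, ← qmap_pow_mk S F hSF, hv1]
      have hSspan : S ≤ Submodule.span ℂ (Set.range
          (fun p : (Σ o : Option ι, Fin ((o.elim n nn) + 1)) =>
            (F ^ (p.2 : ℕ)) ((p.1.elim u v)))) := by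
        rw [hS, strS, Submodule.span_le]
        rintro z ⟨j, rfl⟩
        exact Submodule.subset_span ⟨⟨none, j⟩, rfl⟩
      have : x = (x - y) + y := by abel
      rw [this]
      exact Submodule.add_mem _ (hSspan hxy) hyspan

end Sl2CR

open Module LinearMap Sl2CR in
/-- If every eigenvalue of `H` on a finite-dimensional representation of
`sl(2,ℂ)` is an even integer, then `dim ker E = dim ker H`. -/
theorem sl2_finrank_ker_E_eq_finrank_ker_H_of_even_eigenvalues
    (V : Type*) [AddCommGroup V] [Module ℂ V] [FiniteDimensional ℂ V]
    (H E F : Module.End ℂ V)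
    (hHE : ⁅H, E⁆ = (2 : ℂ) • E)
    (hHF : ⁅H, F⁆ = (-2 : ℂ) • F)
    (hEF : ⁅E, F⁆ = H)
    (heven : ∀ μ : ℂ, Module.End.HasEigenvalue H μ → ∃ k : ℤ, μ = 2 * k) :
    Module.finrank ℂ (LinearMap.ker E) = Module.finrank ℂ (LinearMap.ker H) := by
  classical
  obtain ⟨ι, instι, n, v, h1, h2, h3, h4, h5⟩ :=
    strung (finrank ℂ V) V le_rfl H E F hHE hHF hEF
  let b : Basis (Σ i : ι, Fin (n i + 1)) ℂ V := Basis.mk h4 (le_of_eq h5.symm)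
  have hbp : ∀ p : (Σ i : ι, Fin (n i + 1)), b p = (F ^ (p.2 : ℕ)) (v p.1) := by
    intro p
    simp [b, Basis.mk_apply]
  -- the action of H on the basis
  have hHb : ∀ p : (Σ i : ι, Fin (n i + 1)),
      H (b p) = ((n p.1 : ℂ) - 2 * (p.2 : ℕ)) • b p := by
    intro p
    rw [hbp p, h_string hHF (h1 p.1) (p.2 : ℕ), ← hbp p]
  -- the action of E on the basis
  set τ : (Σ i : ι, Fin (n i + 1)) → (Σ i : ι, Fin (n i + 1)) := fun p =>
    ⟨p.1, ⟨(p.2 : ℕ) - 1, lt_of_le_of_lt (Nat.sub_le _ _) p.2.isLt⟩⟩ with hτdef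
  set μE : (Σ i : ι, Fin (n i + 1)) → ℂ := fun p =>
    ((p.2 : ℕ) : ℂ) * ((n p.1 : ℂ) + 1 - ((p.2 : ℕ) : ℂ)) with hμEdef
  have hEb : ∀ p : (Σ i : ι, Fin (n i + 1)), E (b p) = μE p • b (τ p) := by
    rintro ⟨i, j⟩
    rcases hj0 : (j : ℕ) with _ | j'
    · rw [hbp ⟨i, j⟩]
      simp only [hj0, pow_zero, Module.End.one_apply, h2 i, hμEdef, Nat.cast_zero, zero_mul,
        zero_smul]
    · rw [hbp ⟨i, j⟩, hbp (τ ⟨i, j⟩), hj0]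
      have hexp : (F ^ (((τ ⟨i, j⟩).2 : ℕ))) (v (τ ⟨i, j⟩).1) = (F ^ j') (v i) := by
        rw [hτdef]
        simp [hj0]
      rw [hexp, e_string hHF hEF (h1 i) (h2 i) j']
      congr 1
      simp only [hμEdef, hj0]
      push_cast
      ring
  -- every weight is even
  have hvne : ∀ i, v i ≠ 0 := by
    intro i
    have := h4.ne_zero ⟨i, 0⟩
    simpa using this
  have heig : ∀ i, Module.End.HasEigenvalue H ((n i : ℂ)) := by
    intro i
    exact Module.End.hasEigenvalue_of_hasEigenvector
      ⟨Module.End.mem_eigenspace_iff.2 (h1 i), hvne i⟩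
  have hkex : ∀ i, ∃ k : ℕ, n i = 2 * k := by
    intro i
    obtain ⟨k, hk⟩ := heven _ (heig i)
    have hk' : (n i : ℤ) = 2 * k := by exact_mod_cast hk
    exact ⟨k.toNat, by omega⟩
  choose k hk using hkex
  -- count the kernel of E
  have hcE : finrank ℂ (LinearMap.ker E) = Fintype.card {p : Σ i : ι, Fin (n i + 1) // μE p = 0} := by
    apply finrank_ker_eq_card b E μE τ hEb
    rintro ⟨i, j⟩ hp ⟨i', j'⟩ hq hpq
    simp only [Set.mem_setOf_eq, hμEdef, mul_ne_zero_iff] at hp hq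
    have hj : (j : ℕ) ≠ 0 := fun h => hp.1 (by rw [h]; exact Nat.cast_zero)
    have hj' : (j' : ℕ) ≠ 0 := fun h => hq.1 (by rw [h]; exact Nat.cast_zero)
    have h1' : i = i' := congrArg Sigma.fst hpq
    subst h1'
    have h2' : ((j : ℕ) - 1) = ((j' : ℕ) - 1) := by
      have := congrArg (fun q : (Σ i : ι, Fin (n i + 1)) => (q.2 : ℕ)) hpq
      simpa [hτdef] using this
    have : (j : ℕ) = (j' : ℕ) := by omega
    exact Sigma.ext rfl (heq_of_eq (Fin.ext this))
  -- count the kernel of H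
  have hcH : finrank ℂ (LinearMap.ker H)
      = Fintype.card {p : Σ i : ι, Fin (n i + 1) //
          ((n p.1 : ℂ) - 2 * ((p.2 : ℕ) : ℂ)) = 0} := by
    apply finrank_ker_eq_card b H _ (fun p => p) hHb
    exact fun a _ c _ h => h
  -- both subtypes are in bijection with ι
  have eE : {p : Σ i : ι, Fin (n i + 1) // μE p = 0} ≃ ι := by
    refine ⟨fun q => q.1.1, fun i => ⟨⟨i, ⟨0, by omega⟩⟩, by simp [hμEdef]⟩, ?_, fun i => rfl⟩
    rintro ⟨⟨i, j⟩, hq⟩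
    simp only [hμEdef, mul_eq_zero] at hq
    have hj0 : (j : ℕ) = 0 := by
      rcases hq with h | h
      · exact_mod_cast h
      · exfalso
        rw [sub_eq_zero] at h
        have : (((n i + 1 : ℕ)) : ℂ) = ((j : ℕ) : ℂ) := by push_cast; linear_combination h
        have h2' : n i + 1 = (j : ℕ) := by exact_mod_cast this
        omega
    exact Subtype.ext (Sigma.ext rfl (heq_of_eq (Fin.ext (by simpa using hj0.symm))))
  have eH : {p : Σ i : ι, Fin (n i + 1) //
      ((n p.1 : ℂ) - 2 * ((p.2 : ℕ) : ℂ)) = 0} ≃ ι := by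
    refine ⟨fun q => q.1.1, fun i => ⟨⟨i, ⟨k i, by have := hk i; omega⟩⟩, ?_⟩, ?_, fun i => rfl⟩
    · show ((n i : ℂ) - 2 * ((k i : ℕ) : ℂ)) = 0
      rw [hk i]
      push_cast
      ring
    · rintro ⟨⟨i, j⟩, hq⟩
      have hq' : ((n i : ℕ) : ℂ) = ((2 * (j : ℕ) : ℕ) : ℂ) := by
        rw [sub_eq_zero] at hq
        push_cast
        exact_mod_cast hq
      have hq'' : n i = 2 * (j : ℕ) := by exact_mod_cast hq'
      have : k i = (j : ℕ) := by have := hk i; omega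
      exact Subtype.ext (Sigma.ext rfl (heq_of_eq (Fin.ext (by simpa using this))))
  rw [hcE, hcH, Fintype.card_congr eE, Fintype.card_congr eH]
end
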